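/- arXiv:1604.03423 — 3 statements merged into one kernel-verified Lean document; each statement's English description precedes it below -/
import Mathlib

section
/- For every integer k ≥ 1, E[tr(R^{2k})] ≤ (2k)^{2k−2}·n^{k+1}. -/
def sgn (b : Bool) : ℝ := if b then 1 else -1

noncomputable def Pr {n : ℕ} (P : (Sym2 (Fin n) → Bool) → Prop) : ℝ := by
  classical
  exact ((Finset.univ.filter P).card : ℝ) / (Fintype.card (Sym2 (Fin n) → Bool))

noncomputable def Ex {n : ℕ} (f : (Sym2 (Fin n) → Bool) → ℝ) : ℝ :=
  (∑ g : Sym2 (Fin n) → Bool, f g) / (Fintype.card (Sym2 (Fin n) → Bool))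

noncomputable def Rmat {n : ℕ} (g : Sym2 (Fin n) → Bool) : Matrix (Fin n) (Fin n) ℝ :=
  Matrix.of fun i j => if i = j then 0 else sgn (g s(i, j))

def cyc {m : ℕ} (j : Fin m) : Fin m := ⟨((j : ℕ) + 1) % m, Nat.mod_lt _ j.pos⟩

variable {ι : Type*} [Fintype ι] [DecidableEq ι]

lemma pow_apply_walk (m : ℕ) (A : Matrix ι ι ℝ) (i j : ι) :
    (A ^ m) i j = ∑ w : Fin m → ι,
      (∏ t : Fin m, A ((Fin.cons i w : Fin (m+1) → ι) t.castSucc)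
          ((Fin.cons i w : Fin (m+1) → ι) t.succ)) *
        (if (Fin.cons i w : Fin (m+1) → ι) (Fin.last m) = j then 1 else 0) := by
  induction m generalizing i j with
  | zero =>
      simp [Matrix.one_apply]
  | succ m ih =>
      rw [pow_succ', Matrix.mul_apply]
      simp_rw [ih]
      rw [← Equiv.sum_comp (Fin.consEquiv (fun _ : Fin (m+1) => ι))
        (fun w : Fin (m+1) → ι =>
          (∏ t : Fin (m+1), A ((Fin.cons i w : Fin (m+2) → ι) t.castSucc)
            ((Fin.cons i w : Fin (m+2) → ι) t.succ)) *
          (if (Fin.cons i w : Fin (m+2) → ι) (Fin.last (m+1)) = j then 1 else 0))]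
      rw [Fintype.sum_prod_type]
      refine Finset.sum_congr rfl fun x _ => ?_
      rw [Finset.mul_sum]
      refine Finset.sum_congr rfl fun w _ => ?_
      have hcons : (Fin.consEquiv (fun _ : Fin (m+1) => ι)) (x, w) = Fin.cons x w := rfl
      rw [hcons]
      rw [Fin.prod_univ_succ]
      have h0 : ((Fin.cons i (Fin.cons x w) : Fin (m+2) → ι) (Fin.castSucc 0)) = i := rfl
      have h1 : ((Fin.cons i (Fin.cons x w) : Fin (m+2) → ι) (Fin.succ 0)) = x := rfl
      rw [h0, h1]
      have hlast : (Fin.cons i (Fin.cons x w) : Fin (m+2) → ι) (Fin.last (m+1))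
          = (Fin.cons x w : Fin (m+1) → ι) (Fin.last m) := by
        rw [← Fin.succ_last, Fin.cons_succ]
      rw [hlast]
      have hfac : ∀ t : Fin m,
          A ((Fin.cons i (Fin.cons x w) : Fin (m+2) → ι) (Fin.castSucc (Fin.succ t)))
            ((Fin.cons i (Fin.cons x w) : Fin (m+2) → ι) (Fin.succ (Fin.succ t)))
          = A ((Fin.cons x w : Fin (m+1) → ι) t.castSucc)
              ((Fin.cons x w : Fin (m+1) → ι) t.succ) := by
        intro t
        rw [← Fin.succ_castSucc, Fin.cons_succ, Fin.cons_succ]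
      simp_rw [hfac]
      ring

lemma trace_pow_walk (m : ℕ) (hm : 1 ≤ m) (A : Matrix ι ι ℝ) :
    (A ^ m).trace = ∑ u : Fin m → ι, ∏ t : Fin m, A (u t) (u (cyc t)) := by
  obtain ⟨l, rfl⟩ : ∃ l, m = l + 1 := ⟨m - 1, (Nat.succ_pred_eq_of_pos hm).symm⟩
  rw [Matrix.trace]
  have hdiag : ∀ i : ι, (A ^ (l+1)).diag i = (A ^ (l+1)) i i := fun i => rfl
  simp_rw [hdiag, pow_apply_walk]
  set G : (Fin (l+2) → ι) → ℝ := fun v =>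
      (∏ t : Fin (l+1), A (v t.castSucc) (v t.succ)) *
        (if v (Fin.last (l+1)) = v 0 then 1 else 0) with hG
  have step1 : (∑ x : ι, ∑ w : Fin (l+1) → ι,
      (∏ t : Fin (l+1), A ((Fin.cons x w : Fin (l+2) → ι) t.castSucc)
          ((Fin.cons x w : Fin (l+2) → ι) t.succ)) *
        (if (Fin.cons x w : Fin (l+2) → ι) (Fin.last (l+1)) = x then 1 else 0))
      = ∑ v : Fin (l+2) → ι, G v := by
    rw [← Equiv.sum_comp (Fin.consEquiv (fun _ : Fin (l+2) => ι)) G,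
      Fintype.sum_prod_type]
    rfl
  rw [step1]
  have step2 : ∑ v : Fin (l+2) → ι, G v
      = ∑ v ∈ Finset.univ.filter (fun v : Fin (l+2) → ι => v (Fin.last (l+1)) = v 0),
          ∏ t : Fin (l+1), A (v t.castSucc) (v t.succ) := by
    rw [Finset.sum_filter]
    exact Finset.sum_congr rfl fun v _ => by simp only [hG, mul_ite, mul_one, mul_zero]
  rw [step2]
  refine Finset.sum_nbij' (fun v => v ∘ Fin.castSucc) (fun u => Fin.snoc u (u 0))
    ?_ ?_ ?_ ?_ ?_
  · intro v _; exact Finset.mem_univ _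
  · intro u _
    simp only [Finset.mem_filter, Finset.mem_univ, true_and]
    rw [Fin.snoc_last, show (0 : Fin (l+2)) = Fin.castSucc 0 by rfl, Fin.snoc_castSucc]
  · intro v hv
    simp only [Finset.mem_filter, Finset.mem_univ, true_and] at hv
    funext a
    refine Fin.lastCases ?_ (fun t => ?_) a
    · simp only [Fin.snoc_last, Function.comp_apply, Fin.castSucc_zero]
      exact hv.symm
    · simp
  · intro u _
    funext t
    simp
  · intro v hv
    simp only [Finset.mem_filter, Finset.mem_univ, true_and] at hv
    refine Finset.prod_congr rfl fun t _ => ?_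
    simp only [Function.comp_apply]
    congr 1
    rcases Nat.lt_or_ge ((t : ℕ) + 1) (l + 1) with h | h
    · have h1 : (cyc t).castSucc = t.succ := by
        apply Fin.ext
        simp [cyc, Nat.mod_eq_of_lt h]
      rw [h1]
    · have ht : (t : ℕ) + 1 = l + 1 := le_antisymm t.isLt h
      have h1 : (cyc t).castSucc = (0 : Fin (l+2)) := by
        apply Fin.ext
        simp [cyc, ht]
      have h2 : t.succ = Fin.last (l+1) := by
        apply Fin.ext
        simp [ht]
      rw [h1, h2, hv]

open Classical in
noncomputable def Good {n m : ℕ} (w : Fin m → Fin n) : Prop :=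
  (∀ t, w t ≠ w (cyc t)) ∧
    ∀ e : Sym2 (Fin n),
      Even (Finset.univ.filter (fun t => s(w t, w (cyc t)) = e)).card

lemma abs_sgn (b : Bool) : |sgn b| = 1 := by
  cases b <;> simp [sgn]

lemma sgn_not (b : Bool) : sgn (!b) = - sgn b := by
  cases b <;> simp [sgn]

open Classical in
lemma exp_term {n m : ℕ} (w : Fin m → Fin n) :
    Ex (fun g => ∏ t : Fin m, Rmat g (w t) (w (cyc t)))
      ≤ if Good w then 1 else 0 := by
  have hN : (0:ℝ) < (Fintype.card (Sym2 (Fin n) → Bool) : ℝ) := by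
    exact_mod_cast Fintype.card_pos
  by_cases hG : Good w
  · rw [if_pos hG, Ex, div_le_one hN]
    calc ∑ g : Sym2 (Fin n) → Bool, ∏ t : Fin m, Rmat g (w t) (w (cyc t))
        ≤ ∑ _g : Sym2 (Fin n) → Bool, (1:ℝ) := by
          refine Finset.sum_le_sum fun g _ => ?_
          refine le_trans (le_abs_self _) ?_
          rw [Finset.abs_prod]
          refine Finset.prod_le_one (fun t _ => abs_nonneg _) fun t _ => ?_
          show |if w t = w (cyc t) then (0:ℝ) else sgn (g s(w t, w (cyc t)))| ≤ 1
          split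
          · simp
          · rw [abs_sgn]
      _ = (Fintype.card (Sym2 (Fin n) → Bool) : ℝ) := by
          rw [Finset.sum_const, nsmul_eq_mul, mul_one, Finset.card_univ]
  · rw [if_neg hG]
    by_cases hloop : ∃ t0, w t0 = w (cyc t0)
    · obtain ⟨t0, ht0⟩ := hloop
      have hz : ∀ g : Sym2 (Fin n) → Bool,
          (∏ t : Fin m, Rmat g (w t) (w (cyc t))) = 0 := by
        intro g
        refine Finset.prod_eq_zero (Finset.mem_univ t0) ?_
        show (if w t0 = w (cyc t0) then (0:ℝ) else _) = 0
        rw [if_pos ht0]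
      rw [Ex]
      simp only [hz, Finset.sum_const_zero, zero_div, le_refl]
    · push_neg at hloop
      have hG' : ¬ ∀ e : Sym2 (Fin n),
          Even (Finset.univ.filter (fun t => s(w t, w (cyc t)) = e)).card := by
        intro hB
        exact hG ⟨hloop, hB⟩
      push_neg at hG'
      obtain ⟨e0, he0⟩ := hG'
      have hodd : Odd (Finset.univ.filter
          (fun t : Fin m => s(w t, w (cyc t)) = e0)).card :=
        Nat.not_even_iff_odd.mp he0
      have hterm : ∀ g : Sym2 (Fin n) → Bool,
          (∏ t : Fin m, Rmat g (w t) (w (cyc t)))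
            = ∏ t : Fin m, sgn (g s(w t, w (cyc t))) := by
        intro g
        refine Finset.prod_congr rfl fun t _ => ?_
        show (if w t = w (cyc t) then (0:ℝ) else _) = _
        rw [if_neg (hloop t)]
      set flip : (Sym2 (Fin n) → Bool) → (Sym2 (Fin n) → Bool) :=
        fun g => Function.update g e0 (!(g e0)) with hflip
      have hinv : Function.Involutive flip := by
        intro g
        funext x
        by_cases hx : x = e0
        · subst hx
          simp [hflip, Function.update_self]
        · simp [hflip, Function.update_of_ne hx]
      have hkey : ∀ g, (∏ t : Fin m, sgn (flip g s(w t, w (cyc t))))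
          = - ∏ t : Fin m, sgn (g s(w t, w (cyc t))) := by
        intro g
        have hfac : ∀ t : Fin m, sgn (flip g s(w t, w (cyc t)))
            = (if s(w t, w (cyc t)) = e0 then (-1:ℝ) else 1)
              * sgn (g s(w t, w (cyc t))) := by
          intro t
          by_cases he : s(w t, w (cyc t)) = e0
          · rw [if_pos he, he]
            simp [hflip, Function.update_self, sgn_not]
          · rw [if_neg he]
            simp [hflip, Function.update_of_ne he]
        rw [Finset.prod_congr rfl fun t _ => hfac t, Finset.prod_mul_distrib]
        rw [Finset.prod_ite (fun _ => (-1:ℝ)) (fun _ => (1:ℝ))]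
        rw [Finset.prod_const, Finset.prod_const, one_pow, mul_one,
          hodd.neg_one_pow]
        ring
      have hsum : (∑ g : Sym2 (Fin n) → Bool,
          ∏ t : Fin m, sgn (g s(w t, w (cyc t)))) = 0 := by
        have h1 : (∑ g : Sym2 (Fin n) → Bool,
            ∏ t : Fin m, sgn (flip g s(w t, w (cyc t))))
            = ∑ g : Sym2 (Fin n) → Bool,
              ∏ t : Fin m, sgn (g s(w t, w (cyc t))) :=
          Equiv.sum_comp hinv.toPerm
            (fun g => ∏ t : Fin m, sgn (g s(w t, w (cyc t))))
        rw [Finset.sum_congr rfl fun g _ => hkey g, Finset.sum_neg_distrib] at h1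
        linarith
      rw [Ex]
      rw [Finset.sum_congr rfl fun g _ => hterm g, hsum, zero_div]

noncomputable def nth {m : ℕ} (hm : 0 < m) (F : Finset (Fin m)) (j : ℕ) : Fin m :=
  if h : j < F.card then ((F.orderIsoOfFin rfl) ⟨j, h⟩ : Fin m) else ⟨0, hm⟩

noncomputable def rnk {m : ℕ} (F : Finset (Fin m)) (a : Fin m) : ℕ := by
  classical
  exact if h : a ∈ F then ((F.orderIsoOfFin rfl).symm ⟨a, h⟩ : Fin F.card).val else 0

lemma rnk_lt {m : ℕ} (F : Finset (Fin m)) (a : Fin m) (h : a ∈ F) :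
    rnk F a < F.card := by
  classical
  rw [rnk]
  simp only [h, dif_pos]
  exact ((F.orderIsoOfFin rfl).symm ⟨a, h⟩).isLt

lemma nth_rnk {m : ℕ} (hm : 0 < m) (F : Finset (Fin m)) (a : Fin m) (h : a ∈ F) :
    nth hm F (rnk F a) = a := by
  classical
  rw [nth, dif_pos (rnk_lt F a h)]
  have : (⟨rnk F a, rnk_lt F a h⟩ : Fin F.card)
      = (F.orderIsoOfFin rfl).symm ⟨a, h⟩ := by
    apply Fin.ext
    simp [rnk, h]
  rw [this]
  simp

noncomputable def ftime {n m : ℕ} (w : Fin m → Fin n) (t : Fin m) : Fin m :=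
  (Finset.univ.filter (fun s => w s = w t)).min'
    ⟨t, by simp⟩

lemma ftime_spec {n m : ℕ} (w : Fin m → Fin n) (t : Fin m) :
    w (ftime w t) = w t := by
  have := (Finset.univ.filter (fun s => w s = w t)).min'_mem
    ⟨t, by simp⟩
  rw [Finset.mem_filter] at this
  exact this.2

lemma ftime_le {n m : ℕ} (w : Fin m → Fin n) {s t : Fin m} (h : w s = w t) :
    ftime w t ≤ s :=
  Finset.min'_le _ _ (by simp [h])

lemma ftime_congr {n m : ℕ} (w : Fin m → Fin n) {s t : Fin m} (h : w s = w t) :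
    ftime w s = ftime w t := by
  rw [ftime, ftime]
  congr 1
  ext u
  simp [h]

noncomputable def Fset {n m : ℕ} (w : Fin m → Fin n) : Finset (Fin m) :=
  Finset.univ.filter (fun t => ftime w t = t)

lemma ftime_mem_Fset {n m : ℕ} (w : Fin m → Fin n) (t : Fin m) :
    ftime w t ∈ Fset w := by
  rw [Fset]
  simp only [Finset.mem_filter, Finset.mem_univ, true_and]
  exact ftime_congr w (ftime_spec w t)

open Classical in
lemma edges_card_le {n k : ℕ} (hk : 1 ≤ k) {w : Fin (2*k) → Fin n} (hw : Good w) :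
    (Finset.univ.image (fun t : Fin (2*k) => s(w t, w (cyc t)))).card ≤ k := by
  classical
  set edges := Finset.univ.image (fun t : Fin (2*k) => s(w t, w (cyc t))) with hed
  have htotal : (Finset.univ : Finset (Fin (2*k))).card
      = ∑ e ∈ edges, (Finset.univ.filter
          (fun t : Fin (2*k) => s(w t, w (cyc t)) = e)).card :=
    Finset.card_eq_sum_card_image _ _
  have hfiber : ∀ e ∈ edges, 2 ≤ (Finset.univ.filter
      (fun t : Fin (2*k) => s(w t, w (cyc t)) = e)).card := by
    intro e he
    obtain ⟨t, _, ht⟩ := Finset.mem_image.mp he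
    have hpos : 0 < (Finset.univ.filter
        (fun t : Fin (2*k) => s(w t, w (cyc t)) = e)).card :=
      Finset.card_pos.mpr ⟨t, by simp [ht]⟩
    obtain ⟨d, hd⟩ := hw.2 e
    omega
  have h2 : edges.card • 2 ≤ ∑ e ∈ edges, (Finset.univ.filter
      (fun t : Fin (2*k) => s(w t, w (cyc t)) = e)).card :=
    Finset.card_nsmul_le_sum _ _ _ hfiber
  rw [← htotal, Finset.card_univ, Fintype.card_fin] at h2
  rw [smul_eq_mul] at h2
  omega

open Classical in
lemma Fset_card_le {n k : ℕ} (hk : 1 ≤ k) {w : Fin (2*k) → Fin n} (hw : Good w) :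
    (Fset w).card ≤ k + 1 := by
  classical
  set edges := Finset.univ.image (fun t : Fin (2*k) => s(w t, w (cyc t))) with hed
  have hm : 2 ≤ 2*k := by omega
  -- map each nonzero first-time to the edge entering it
  set φ : Fin (2*k) → Sym2 (Fin n) := fun t =>
    s(w ⟨(t:ℕ) - 1, by omega⟩, w t) with hφ
  have hmaps : ∀ t ∈ (Fset w).erase ⟨0, by omega⟩, φ t ∈ edges := by
    intro t ht
    have ht0 : t ≠ ⟨0, by omega⟩ := (Finset.mem_erase.mp ht).1
    have htv : 1 ≤ (t:ℕ) := by
      rcases Nat.eq_zero_or_pos (t:ℕ) with h | h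
      · exact absurd (Fin.ext h) ht0
      · exact h
    refine Finset.mem_image.mpr ⟨⟨(t:ℕ) - 1, by omega⟩, Finset.mem_univ _, ?_⟩
    have hcyc : cyc (⟨(t:ℕ) - 1, by omega⟩ : Fin (2*k)) = t := by
      apply Fin.ext
      simp only [cyc]
      have : (t:ℕ) - 1 + 1 = (t:ℕ) := by omega
      rw [this, Nat.mod_eq_of_lt t.isLt]
    rw [hcyc]
  have hinj : Set.InjOn φ ((Fset w).erase ⟨0, by omega⟩) := by
    have key : ∀ t ∈ (Fset w).erase ⟨0, by omega⟩,
        ∀ t' ∈ (Fset w).erase ⟨0, by omega⟩, (t:ℕ) < (t':ℕ) → φ t ≠ φ t' := by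
      intro t ht t' ht' hlt heq
      have hft' : ftime w t' = t' := by
        have := (Finset.mem_erase.mp ht').2
        rw [Fset, Finset.mem_filter] at this
        exact this.2
      have hwt' : w t' = w ⟨(t:ℕ) - 1, by omega⟩ ∨ w t' = w t := by
        rw [hφ] at heq
        simp only at heq
        rw [Sym2.eq_iff] at heq
        rcases heq with ⟨h1, h2⟩ | ⟨h1, h2⟩
        · exact Or.inr h2.symm
        · exact Or.inl h1.symm
      rcases hwt' with h | h
      · have := ftime_le w h.symm
        rw [hft'] at this
        rw [Fin.le_def] at this
        simp only at this
        omega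
      · have := ftime_le w h.symm
        rw [hft'] at this
        rw [Fin.le_def] at this
        omega
    intro t ht t' ht' heq
    by_contra hne
    have hvne : (t:ℕ) ≠ (t':ℕ) := fun hh => hne (Fin.ext hh)
    rcases Nat.lt_or_ge (t:ℕ) (t':ℕ) with h | h
    · exact key t ht t' ht' h heq
    · exact key t' ht' t ht (by omega) heq.symm
  have hcard1 : ((Fset w).erase ⟨0, by omega⟩).card ≤ edges.card :=
    Finset.card_le_card_of_injOn φ hmaps hinj
  have h0mem : (⟨0, by omega⟩ : Fin (2*k)) ∈ Fset w := by
    rw [Fset]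
    simp only [Finset.mem_filter, Finset.mem_univ, true_and]
    apply le_antisymm
    · exact ftime_le w rfl
    · simp [Fin.le_def]
  have h3 := Finset.card_erase_add_one h0mem
  have h4 := edges_card_le hk hw
  rw [← hed] at h4
  omega

lemma ftime_zero {n m : ℕ} (w : Fin m → Fin n) (t : Fin m) (ht : (t:ℕ) = 0) :
    ftime w t = t := by
  apply le_antisymm (ftime_le w rfl)
  rw [Fin.le_def, ht]
  omega

lemma ftime_one {n k : ℕ} (hk : 1 ≤ k) {w : Fin (2*k) → Fin n} (hw : Good w)
    (t : Fin (2*k)) (ht : (t:ℕ) = 1) : ftime w t = t := by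
  have hle := ftime_le w (rfl : w t = w t)
  rw [Fin.le_def, ht] at hle
  rcases Nat.eq_zero_or_pos ((ftime w t : ℕ)) with h0 | h1
  · exfalso
    have hzt : (⟨0, by omega⟩ : Fin (2*k)) = ftime w t := Fin.ext (by simp; omega)
    have hcyc : cyc (⟨0, by omega⟩ : Fin (2*k)) = t := by
      apply Fin.ext
      simp only [cyc]
      rw [ht]
      exact Nat.mod_eq_of_lt (by omega)
    have := hw.1 ⟨0, by omega⟩
    rw [hcyc] at this
    apply this
    rw [hzt]
    exact ftime_spec w t
  · exact Fin.ext (by omega)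

open Classical in
lemma count_good {n k : ℕ} (hn : 1 ≤ n) (hk : 1 ≤ k) :
    (Finset.univ.filter (fun w : Fin (2*k) → Fin n => Good w)).card
      ≤ n^(k+1) * (2*k)^(2*k-2) := by
  classical
  have hm : 0 < 2*k := by omega
  set enc : (Fin (2*k) → Fin n) → (Fin (k+1) → Fin n) × (Fin (2*k-2) → Fin (2*k)) :=
    fun w => (fun j => w (nth hm (Fset w) j.val),
              fun s => ftime w ⟨(s:ℕ) + 2, by have := s.isLt; omega⟩) with henc
  have key : Set.InjOn enc (Finset.univ.filter (fun w : Fin (2*k) → Fin n => Good w)) := by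
    intro w hwmem w' hwmem' h
    rw [Finset.coe_filter] at hwmem hwmem'
    have hw : Good w := hwmem.2
    have hw' : Good w' := hwmem'.2
    have h1 : ∀ j : Fin (k+1), w (nth hm (Fset w) j.val) = w' (nth hm (Fset w') j.val) :=
      fun j => congrFun (congrArg Prod.fst h) j
    have h2 : ∀ s : Fin (2*k-2),
        ftime w ⟨(s:ℕ) + 2, by have := s.isLt; omega⟩
          = ftime w' ⟨(s:ℕ) + 2, by have := s.isLt; omega⟩ :=
      fun s => congrFun (congrArg Prod.snd h) s
    have hft : ftime w = ftime w' := by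
      funext t
      rcases Nat.lt_or_ge (t:ℕ) 2 with h2t | h2t
      · rcases Nat.eq_zero_or_pos (t:ℕ) with h0 | h1t
        · rw [ftime_zero w t h0, ftime_zero w' t h0]
        · have ht1 : (t:ℕ) = 1 := by omega
          rw [ftime_one hk hw t ht1, ftime_one hk hw' t ht1]
      · have hs : (t:ℕ) - 2 < 2*k - 2 := by have := t.isLt; omega
        have := h2 ⟨(t:ℕ) - 2, hs⟩
        have harg : (⟨((⟨(t:ℕ) - 2, hs⟩ : Fin (2*k-2)):ℕ) + 2, by omega⟩ : Fin (2*k)) = t :=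
          Fin.ext (by simp; omega)
        rwa [harg] at this
    have hFs : Fset w = Fset w' := by
      rw [Fset, Fset, hft]
    funext t
    have hmem := ftime_mem_Fset w t
    have hr := rnk_lt (Fset w) (ftime w t) hmem
    have hcard := Fset_card_le hk hw
    have hj := h1 ⟨rnk (Fset w) (ftime w t), by omega⟩
    simp only at hj
    rw [nth_rnk hm (Fset w) (ftime w t) hmem, ftime_spec w t] at hj
    rw [hFs, hft] at hj
    rw [nth_rnk hm (Fset w') (ftime w' t) (ftime_mem_Fset w' t),
      ftime_spec w' t] at hj
    exact hj
  have hle := Finset.card_le_card_of_injOn enc (fun w _ => Finset.mem_univ (enc w)) key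
  rw [Finset.card_univ, Fintype.card_prod, Fintype.card_fun, Fintype.card_fun] at hle
  simpa using hle

theorem stmt6 (n k : ℕ) (hn : 1 ≤ n) (hk : 1 ≤ k) :
    Ex (n := n) (fun g => Matrix.trace (Rmat g ^ (2 * k)))
      ≤ (((2 * k) ^ (2 * k - 2) * n ^ (k + 1) : ℕ) : ℝ) := by
  classical
  have hN : (0:ℝ) < (Fintype.card (Sym2 (Fin n) → Bool) : ℝ) := by
    exact_mod_cast Fintype.card_pos
  have htr : ∀ g : Sym2 (Fin n) → Bool,
      Matrix.trace (Rmat g ^ (2 * k))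
        = ∑ w : Fin (2*k) → Fin n, ∏ t : Fin (2*k), Rmat g (w t) (w (cyc t)) :=
    fun g => trace_pow_walk (2*k) (by omega) (Rmat g)
  have hEx : Ex (n := n) (fun g => Matrix.trace (Rmat g ^ (2 * k)))
      = ∑ w : Fin (2*k) → Fin n,
          Ex (fun g => ∏ t : Fin (2*k), Rmat g (w t) (w (cyc t))) := by
    rw [Ex]
    rw [Finset.sum_congr rfl fun g _ => htr g]
    rw [Finset.sum_comm]
    rw [Finset.sum_div]
    rfl
  rw [hEx]
  have hstep : ∑ w : Fin (2*k) → Fin n,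
      Ex (fun g => ∏ t : Fin (2*k), Rmat g (w t) (w (cyc t)))
      ≤ ∑ w : Fin (2*k) → Fin n, (if Good w then (1:ℝ) else 0) :=
    Finset.sum_le_sum fun w _ => exp_term w
  refine le_trans hstep ?_
  rw [Finset.sum_boole]
  have hcount := count_good hn hk
  have : ((Finset.univ.filter (fun w : Fin (2*k) → Fin n => Good w)).card : ℝ)
      ≤ ((n^(k+1) * (2*k)^(2*k-2) : ℕ) : ℝ) := by
    exact_mod_cast hcount
  refine le_trans this ?_
  apply le_of_eq
  congr 1
  ring
end

section
/- Let (Ω, ℙ) be a probability space, let I be a finite index set with |I| = N ≥ 1, let {M_i : i ∈ I} be random real matrices on Ω all of the same dimensions, and let M = (1/N)·Σ_{i∈I} M_i. Let B and p be positive real numbers such that for every i ∈ I and every real x with 1/2 ≤ x ≤ N, ℙ(‖M_i‖ > B·x) ≤ p/(64·x³). Then ℙ(‖M‖ ≥ B) < p. -/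
noncomputable def opNorm {α β : Type*} [Fintype α] [Fintype β] [DecidableEq β]
    (M : Matrix α β ℝ) : ℝ :=
  ‖LinearMap.toContinuousLinearMap (Matrix.toEuclideanLin M)‖

noncomputable def opT (m n : ℕ) : Matrix (Fin m) (Fin n) ℝ →ₗ[ℝ]
    (EuclideanSpace ℝ (Fin n) →L[ℝ] EuclideanSpace ℝ (Fin m)) :=
  (LinearMap.toContinuousLinearMap.toLinearMap).comp (Matrix.toEuclideanLin).toLinearMap

lemma opNorm_eq (m n : ℕ) (A : Matrix (Fin m) (Fin n) ℝ) : opNorm A = ‖opT m n A‖ := rfl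

lemma opNorm_smul (m n : ℕ) (c : ℝ) (A : Matrix (Fin m) (Fin n) ℝ) :
    opNorm (c • A) = |c| * opNorm A := by
  rw [opNorm_eq, map_smul, norm_smul c ((opT m n) A), Real.norm_eq_abs]; rfl

lemma opNorm_sum_le (m n : ℕ) {I : Type*} (s : Finset I) (f : I → Matrix (Fin m) (Fin n) ℝ) :
    opNorm (∑ i ∈ s, f i) ≤ ∑ i ∈ s, opNorm (f i) := by
  rw [opNorm_eq, map_sum]
  exact norm_sum_le _ _

lemma measurable_opNorm (m n : ℕ) {Ω : Type*} [MeasurableSpace Ω]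
    (f : Ω → Matrix (Fin m) (Fin n) ℝ)
    (hf : ∀ a b, Measurable fun ω => f ω a b) :
    Measurable fun ω => opNorm (f ω) := by
  have h1 : Measurable fun ω => opT m n (f ω) := by
    have key : ∀ ω, opT m n (f ω) = ∑ a : Fin m, ∑ b : Fin n,
        f ω a b • opT m n (Matrix.single a b 1) := by
      intro ω
      conv_lhs => rw [Matrix.matrix_eq_sum_single (f ω)]
      rw [map_sum]
      refine Finset.sum_congr rfl fun a _ => ?_
      rw [map_sum]
      refine Finset.sum_congr rfl fun b _ => ?_
      rw [← map_smul, Matrix.smul_single, smul_eq_mul, mul_one]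
    simp only [key]
    exact Finset.measurable_sum _ fun a _ => Finset.measurable_sum _ fun b _ =>
      (hf a b).smul_const _
  exact (measurable_norm.comp h1 : _)

lemma key_dyadic (B : ℝ) (hB : 0 < B) : ∀ (K : ℕ) (y : ℝ), y ≤ B * 2^K →
    y ≤ B/2 + ∑ k ∈ Finset.range (K+1),
      (if B * (2^k/2) < y then B * (2^k/2) else 0) := by
  intro K
  induction K with
  | zero =>
    intro y hy
    rw [Finset.sum_range_one]
    norm_num
    split_ifs with h
    · nlinarith
    · push_neg at h; nlinarith
  | succ K ih =>
    intro y hy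
    rcases le_or_gt y (B * 2^K) with h | h
    · have h1 := ih y h
      rw [Finset.sum_range_succ]
      have h2 : (0:ℝ) ≤ if B * (2^(K+1)/2) < y then B*(2^(K+1)/2) else 0 := by positivity
      linarith
    · have hall : ∀ k ∈ Finset.range (K+2),
          (if B * ((2:ℝ)^k/2) < y then B * ((2:ℝ)^k/2) else 0) = B * (2^k/2) := by
        intro k hk
        rw [if_pos]
        have hk' : k ≤ K + 1 := Nat.lt_succ_iff.mp (Finset.mem_range.mp hk)
        have h2 : (2:ℝ)^k ≤ 2^(K+1) := pow_le_pow_right₀ (by norm_num) hk'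
        have h3 : (2:ℝ)^(K+1)/2 = 2^K := by rw [pow_succ]; ring
        nlinarith
      rw [Finset.sum_congr rfl hall]
      have hgeo : ∑ k ∈ Finset.range (K+2), B*((2:ℝ)^k/2)
          = B * ((2:ℝ)^(K+2) - 1) / 2 := by
        rw [← Finset.mul_sum, ← Finset.sum_div, geom_sum_eq (by norm_num : (2:ℝ) ≠ 1)]
        ring
      rw [hgeo]
      have e1 : (2:ℝ)^(K+2) = 4 * 2^K := by rw [pow_succ, pow_succ]; ring
      have e2 : (2:ℝ)^(K+1) = 2 * 2^K := by rw [pow_succ]; ring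
      nlinarith

open MeasureTheory in
lemma markov_count {Ω : Type*} [MeasurableSpace Ω] (μ : Measure Ω) {I : Type*} [Fintype I]
    (g : I → Ω → ℝ) (hg : ∀ i, Measurable (g i)) (c t : ℝ) :
    ENNReal.ofReal t *
      μ {ω | t ≤ ((Finset.univ : Finset I).filter fun i => c < g i ω).card}
      ≤ ∑ i, μ {ω | c < g i ω} := by
  classical
  set f : Ω → ENNReal := fun ω => ∑ i, ({ω | c < g i ω}).indicator (fun _ => (1:ENNReal)) ω with hf
  have hA : ∀ i : I, MeasurableSet {ω | c < g i ω} := fun i =>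
    measurableSet_lt measurable_const (hg i)
  have hfm : Measurable f := Finset.measurable_sum _ fun i _ =>
    (measurable_one.indicator (hA i))
  have hsub : {ω | t ≤ ((Finset.univ : Finset I).filter fun i => c < g i ω).card}
      ⊆ {ω | ENNReal.ofReal t ≤ f ω} := by
    intro ω hω
    simp only [Set.mem_setOf_eq] at hω ⊢
    have hcard : f ω = ((Finset.univ : Finset I).filter fun i => c < g i ω).card := by
      simp only [hf, Set.indicator_apply, Set.mem_setOf_eq, Finset.sum_boole]
    rw [hcard]
    calc ENNReal.ofReal t ≤ ENNReal.ofReal (((Finset.univ : Finset I).filter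
          fun i => c < g i ω).card : ℝ) := ENNReal.ofReal_le_ofReal hω
      _ = _ := ENNReal.ofReal_natCast _
  calc ENNReal.ofReal t *
        μ {ω | t ≤ ((Finset.univ : Finset I).filter fun i => c < g i ω).card}
      ≤ ENNReal.ofReal t * μ {ω | ENNReal.ofReal t ≤ f ω} := by
        exact mul_le_mul_right (measure_mono hsub) _
    _ ≤ ∫⁻ ω, f ω ∂μ := mul_meas_ge_le_lintegral₀ hfm.aemeasurable _
    _ = ∑ i, μ {ω | c < g i ω} := by
        simp only [hf]
        rw [lintegral_finset_sum (μ := μ) (s := Finset.univ)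
          (f := fun i ω => ({ω | c < g i ω}).indicator (fun _ => (1:ENNReal)) ω)
          (fun i _ => measurable_one.indicator (hA i))]
        refine Finset.sum_congr rfl fun i _ => ?_
        exact lintegral_indicator_one (hA i)

open MeasureTheory in
theorem stmt13 {Ω : Type*} [MeasurableSpace Ω] (μ : Measure Ω)
    [IsProbabilityMeasure μ]
    {I : Type*} [Fintype I] (N : ℕ) (hN : Fintype.card I = N) (hN1 : 1 ≤ N)
    {m n : ℕ} (M : I → Ω → Matrix (Fin m) (Fin n) ℝ)
    (hmeas : ∀ i a b, Measurable fun ω => M i ω a b)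
    (B p : ℝ) (hB : 0 < B) (hp : 0 < p)
    (hcond : ∀ i, ∀ x : ℝ, 1 / 2 ≤ x → x ≤ N →
      μ {ω | B * x < opNorm (M i ω)} ≤ ENNReal.ofReal (p / (64 * x ^ 3)))
    : μ {ω | B ≤ opNorm ((N : ℝ)⁻¹ • ∑ i, M i ω)} < ENNReal.ofReal p := by
  classical
  have hNpos : (0:ℝ) < N := by exact_mod_cast hN1
  have hN1' : (1:ℝ) ≤ N := by exact_mod_cast hN1
  set K := Nat.clog 2 N with hK
  have hK1 : (N:ℝ) ≤ 2^K := by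
    exact_mod_cast Nat.le_pow_clog (by norm_num) N
  have hK2 : (2:ℝ)^K ≤ 2*N := by
    have : (2:ℕ)^K ≤ 2*N := by
      rcases eq_or_lt_of_le hN1 with h1 | h1
      · rw [hK, ← h1, Nat.clog_one_right]; norm_num
      · have hKpos : 0 < K := by
          rw [hK]; exact Nat.clog_pos (by norm_num) h1
        have hlt : (2:ℕ)^(K-1) < N := Nat.pow_pred_clog_lt_self (by norm_num) h1
        have he : (2:ℕ)^K = 2 * 2^(K-1) := by
          rw [← pow_succ']; congr 1; omega
        omega
    exact_mod_cast this
  -- events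
  set F : ℕ → Set Ω := fun k =>
    {ω | (N:ℝ)/(2*4^k) ≤ ((Finset.univ : Finset I).filter
      fun i => B * (2^k/2) < opNorm (M i ω)).card} with hF
  set G : Set Ω := ⋃ i, {ω | B * (N:ℝ) < opNorm (M i ω)} with hG
  -- inclusion
  have hsub : {ω | B ≤ opNorm ((N : ℝ)⁻¹ • ∑ i, M i ω)}
      ⊆ G ∪ ⋃ k ∈ Finset.range (K+1), F k := by
    intro ω hω
    by_contra hω'
    simp only [Set.mem_union, Set.mem_iUnion, not_or, not_exists, hG, hF,
      Set.mem_setOf_eq] at hω'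
    obtain ⟨hGω, hFω⟩ := hω'
    push_neg at hGω hFω
    -- sum lower bound
    have hsum : (N:ℝ) * B ≤ ∑ i, opNorm (M i ω) := by
      have h1 : B ≤ (N:ℝ)⁻¹ * ∑ i, opNorm (M i ω) := by
        have h2 := Set.mem_setOf_eq ▸ hω
        have h3 : opNorm ((N : ℝ)⁻¹ • ∑ i, M i ω)
            = |(N:ℝ)⁻¹| * opNorm (∑ i, M i ω) := opNorm_smul m n _ _
        have h4 : opNorm (∑ i, M i ω) ≤ ∑ i, opNorm (M i ω) :=
          opNorm_sum_le m n _ _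
        have h5 : |(N:ℝ)⁻¹| = (N:ℝ)⁻¹ := abs_of_pos (by positivity)
        have h6 : (0:ℝ) ≤ (N:ℝ)⁻¹ := by positivity
        calc B ≤ opNorm ((N : ℝ)⁻¹ • ∑ i, M i ω) := h2
          _ = (N:ℝ)⁻¹ * opNorm (∑ i, M i ω) := by rw [h3, h5]
          _ ≤ (N:ℝ)⁻¹ * ∑ i, opNorm (M i ω) := by
              exact mul_le_mul_of_nonneg_left h4 h6
      have h7 : (N:ℝ) * ((N:ℝ)⁻¹ * ∑ i, opNorm (M i ω)) = ∑ i, opNorm (M i ω) := by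
        field_simp
      nlinarith [mul_le_mul_of_nonneg_left h1 (le_of_lt hNpos)]
    -- per-i upper bound
    have hper : ∀ i : I, opNorm (M i ω) ≤ B/2 + ∑ k ∈ Finset.range (K+1),
        (if B * (2^k/2) < opNorm (M i ω) then B * (2^k/2) else 0) := by
      intro i
      refine key_dyadic B hB K _ ?_
      calc opNorm (M i ω) ≤ B * N := hGω i
        _ ≤ B * 2^K := by nlinarith
    have hsumup : ∑ i, opNorm (M i ω) ≤ (N:ℝ) * (B/2) +
        ∑ k ∈ Finset.range (K+1), (B * (2^k/2)) *
          ((Finset.univ : Finset I).filter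
            fun i => B * (2^k/2) < opNorm (M i ω)).card := by
      calc ∑ i, opNorm (M i ω)
          ≤ ∑ i : I, (B/2 + ∑ k ∈ Finset.range (K+1),
            (if B * (2^k/2) < opNorm (M i ω) then B * (2^k/2) else 0)) :=
            Finset.sum_le_sum fun i _ => hper i
        _ = (N:ℝ) * (B/2) + ∑ i : I, ∑ k ∈ Finset.range (K+1),
            (if B * (2^k/2) < opNorm (M i ω) then B * (2^k/2) else 0) := by
            rw [Finset.sum_add_distrib, Finset.sum_const, Finset.card_univ, hN,
              nsmul_eq_mul]
        _ = (N:ℝ) * (B/2) + ∑ k ∈ Finset.range (K+1), ∑ i : I,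
            (if B * (2^k/2) < opNorm (M i ω) then B * (2^k/2) else 0) := by
            rw [Finset.sum_comm]
        _ = (N:ℝ) * (B/2) + ∑ k ∈ Finset.range (K+1), (B * (2^k/2)) *
            ((Finset.univ : Finset I).filter
              fun i => B * (2^k/2) < opNorm (M i ω)).card := by
            congr 1
            refine Finset.sum_congr rfl fun k _ => ?_
            rw [Finset.sum_ite, Finset.sum_const, Finset.sum_const_zero, add_zero,
              nsmul_eq_mul]
            ring
    -- strict bound on the double sum
    have hstrict : ∑ k ∈ Finset.range (K+1), (B * (2^k/2)) *
        (((Finset.univ : Finset I).filter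
          fun i => B * (2^k/2) < opNorm (M i ω)).card : ℝ)
        < ∑ k ∈ Finset.range (K+1), (B * (2^k/2)) * ((N:ℝ)/(2*4^k)) := by
      refine Finset.sum_lt_sum_of_nonempty (Finset.nonempty_range_iff.mpr (by omega))
        fun k hk => ?_
      have hc : (((Finset.univ : Finset I).filter
          fun i => B * (2^k/2) < opNorm (M i ω)).card : ℝ) < (N:ℝ)/(2*4^k) :=
        hFω k hk
      have hpos : (0:ℝ) < B * (2^k/2) := by positivity
      exact mul_lt_mul_of_pos_left hc hpos
    have hgeosum : ∑ k ∈ Finset.range (K+1), (B * ((2:ℝ)^k/2)) * ((N:ℝ)/(2*4^k))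
        ≤ (N:ℝ) * (B/2) := by
      have heq : ∀ k : ℕ, (B * ((2:ℝ)^k/2)) * ((N:ℝ)/(2*4^k))
          = (B * N/4) * (1/2:ℝ)^k := by
        intro k
        have h4 : (4:ℝ)^k = 2^k * 2^k := by rw [← mul_pow]; norm_num
        have h2 : ((1:ℝ)/2)^k = 1/2^k := by rw [div_pow, one_pow]
        have h2p : (0:ℝ) < 2^k := by positivity
        rw [h4, h2]
        field_simp
        ring
      calc ∑ k ∈ Finset.range (K+1), (B * ((2:ℝ)^k/2)) * ((N:ℝ)/(2*4^k))
          = (B*N/4) * ∑ k ∈ Finset.range (K+1), (1/2:ℝ)^k := by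
            rw [Finset.mul_sum]
            exact Finset.sum_congr rfl fun k _ => heq k
        _ ≤ (B*N/4) * 2 := by
            refine mul_le_mul_of_nonneg_left ?_ (by positivity)
            exact sum_geometric_two_le _
        _ = (N:ℝ) * (B/2) := by ring
    linarith
  -- measure bounds
  have hμG : μ G ≤ ENNReal.ofReal (p/64) := by
    have h1 : μ G ≤ ∑ i : I, μ {ω | B * (N:ℝ) < opNorm (M i ω)} := by
      rw [hG]
      refine le_trans (measure_iUnion_le _) ?_
      rw [tsum_fintype]
    have h2 : ∀ i : I, μ {ω | B * (N:ℝ) < opNorm (M i ω)}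
        ≤ ENNReal.ofReal (p / (64 * (N:ℝ)^3)) :=
      fun i => hcond i N (by linarith) le_rfl
    calc μ G ≤ ∑ i : I, μ {ω | B * (N:ℝ) < opNorm (M i ω)} := h1
      _ ≤ ∑ _i : I, ENNReal.ofReal (p / (64 * (N:ℝ)^3)) :=
          Finset.sum_le_sum fun i _ => h2 i
      _ = (N : ENNReal) * ENNReal.ofReal (p / (64 * (N:ℝ)^3)) := by
          rw [Finset.sum_const, Finset.card_univ, hN, nsmul_eq_mul]
      _ = ENNReal.ofReal ((N:ℝ) * (p / (64 * (N:ℝ)^3))) := by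
          rw [ENNReal.ofReal_mul (by positivity), ENNReal.ofReal_natCast]
      _ ≤ ENNReal.ofReal (p/64) := by
          refine ENNReal.ofReal_le_ofReal ?_
          have : (N:ℝ) * (p / (64 * (N:ℝ)^3)) = p / (64 * (N:ℝ)^2) := by
            field_simp
          rw [this, div_le_div_iff₀ (by positivity) (by norm_num)]
          have hsq : (1:ℝ) ≤ (N:ℝ)^2 := by nlinarith
          nlinarith
  have hμF : ∀ k ∈ Finset.range (K+1), μ (F k) ≤ ENNReal.ofReal (p/4 * (1/2:ℝ)^k) := by
    intro k hk
    have hkK : k ≤ K := Nat.lt_succ_iff.mp (Finset.mem_range.mp hk)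
    have ht : (0:ℝ) < (N:ℝ)/(2*4^k) := by positivity
    have hx1 : (1:ℝ)/2 ≤ (2:ℝ)^k/2 := by
      have : (1:ℝ) ≤ 2^k := one_le_pow₀ (by norm_num)
      linarith
    have hx2 : (2:ℝ)^k/2 ≤ N := by
      have : (2:ℝ)^k ≤ 2^K := pow_le_pow_right₀ (by norm_num) hkK
      linarith
    have hmk := markov_count μ (fun i ω => opNorm (M i ω))
      (fun i => measurable_opNorm m n _ (hmeas i)) (B * (2^k/2)) ((N:ℝ)/(2*4^k))
    have h2 : ∑ i : I, μ {ω | B * ((2:ℝ)^k/2) < opNorm (M i ω)}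
        ≤ ENNReal.ofReal ((N:ℝ) * (p / (64 * ((2:ℝ)^k/2)^3))) := by
      calc ∑ i : I, μ {ω | B * ((2:ℝ)^k/2) < opNorm (M i ω)}
          ≤ ∑ _i : I, ENNReal.ofReal (p / (64 * ((2:ℝ)^k/2)^3)) :=
            Finset.sum_le_sum fun i _ => hcond i ((2:ℝ)^k/2) hx1 hx2
        _ = (N : ENNReal) * ENNReal.ofReal (p / (64 * ((2:ℝ)^k/2)^3)) := by
            rw [Finset.sum_const, Finset.card_univ, hN, nsmul_eq_mul]
        _ = ENNReal.ofReal ((N:ℝ) * (p / (64 * ((2:ℝ)^k/2)^3))) := by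
            rw [ENNReal.ofReal_mul (by positivity), ENNReal.ofReal_natCast]
    have h3 : ENNReal.ofReal ((N:ℝ)/(2*4^k)) * μ (F k)
        ≤ ENNReal.ofReal ((N:ℝ) * (p / (64 * ((2:ℝ)^k/2)^3))) := le_trans hmk h2
    have h4 : μ (F k) ≤ ENNReal.ofReal ((N:ℝ) * (p / (64 * ((2:ℝ)^k/2)^3)))
        / ENNReal.ofReal ((N:ℝ)/(2*4^k)) := by
      rw [ENNReal.le_div_iff_mul_le
        (Or.inl (ne_of_gt (ENNReal.ofReal_pos.mpr ht)))
        (Or.inl ENNReal.ofReal_ne_top), mul_comm]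
      exact h3
    refine le_trans h4 ?_
    rw [← ENNReal.ofReal_div_of_pos ht]
    refine ENNReal.ofReal_le_ofReal (le_of_eq ?_)
    have h4k : (4:ℝ)^k = 2^k * 2^k := by rw [← mul_pow]; norm_num
    have h2k : ((1:ℝ)/2)^k = 1/2^k := by rw [div_pow, one_pow]
    have h2p : (0:ℝ) < (2:ℝ)^k := by positivity
    rw [h4k, h2k]
    field_simp
    ring
  -- put it together
  calc μ {ω | B ≤ opNorm ((N : ℝ)⁻¹ • ∑ i, M i ω)}
      ≤ μ (G ∪ ⋃ k ∈ Finset.range (K+1), F k) := measure_mono hsub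
    _ ≤ μ G + μ (⋃ k ∈ Finset.range (K+1), F k) := measure_union_le _ _
    _ ≤ μ G + ∑ k ∈ Finset.range (K+1), μ (F k) := by
        exact add_le_add_right (measure_biUnion_finset_le _ _) _
    _ ≤ ENNReal.ofReal (p/64) + ∑ k ∈ Finset.range (K+1),
          ENNReal.ofReal (p/4 * (1/2:ℝ)^k) := by
        exact add_le_add hμG (Finset.sum_le_sum hμF)
    _ = ENNReal.ofReal (p/64 + ∑ k ∈ Finset.range (K+1), p/4 * (1/2:ℝ)^k) := by
        rw [ENNReal.ofReal_add (by positivity)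
            (Finset.sum_nonneg fun k _ => by positivity),
          ENNReal.ofReal_sum_of_nonneg (fun k _ => by positivity)]
    _ < ENNReal.ofReal p := by
        rw [ENNReal.ofReal_lt_ofReal_iff hp]
        have hle : ∑ k ∈ Finset.range (K+1), p/4 * (1/2:ℝ)^k ≤ p/2 := by
          rw [← Finset.mul_sum]
          calc p/4 * ∑ k ∈ Finset.range (K+1), (1/2:ℝ)^k
              ≤ p/4 * 2 := mul_le_mul_of_nonneg_left (sum_geometric_two_le _)
                (by positivity)
            _ = p/2 := by ring
        linarith
end

section
/- Let H be a bipartite graph with partite sets U and V, with t = |V(H)| vertices and minimal vertex cover of size q. Then there exist a constant c > 0 and an integer N₀, depending only on H, such that for every n ≥ N₀ and every g ∈ Ω (i.e., for every input graph G on n vertices), ‖R_H(g)‖ ≥ c·n^{(t−q)/2}. -/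
abbrev SubsetsCard (n x : ℕ) := {A : Finset (Fin n) // A.card = x}

def tup {n x : ℕ} (A : SubsetsCard n x) (i : Fin x) : Fin n :=
  (A.1.orderIsoOfFin A.2 i : Fin n)

noncomputable def RH {n x y : ℕ} (E : Finset (Fin x × Fin y)) (g : Sym2 (Fin n) → Bool) :
    Matrix (SubsetsCard n x) (SubsetsCard n y) ℝ :=
  Matrix.of fun A B =>
    if Disjoint A.1 B.1 then ∏ e ∈ E, sgn (g s(tup A e.1, tup B e.2)) else 0

def IsVertexCover {x y : ℕ} (E : Finset (Fin x × Fin y)) (S : Finset (Fin x ⊕ Fin y)) : Prop :=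
  ∀ e ∈ E, Sum.inl e.1 ∈ S ∨ Sum.inr e.2 ∈ S

open Finset Matrix in
lemma bilin_le {α β : Type*} [Fintype α] [Fintype β] [DecidableEq β]
    (M : Matrix α β ℝ) (u : α → ℝ) (v : β → ℝ) :
    |∑ A, ∑ B, u A * M A B * v B| ≤
      opNorm M * Real.sqrt (∑ A, u A ^ 2) * Real.sqrt (∑ B, v B ^ 2) := by
  classical
  set L := LinearMap.toContinuousLinearMap (Matrix.toEuclideanLin M) with hL
  set u' : EuclideanSpace ℝ α := (WithLp.equiv 2 (α → ℝ)).symm u with hu'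
  set v' : EuclideanSpace ℝ β := (WithLp.equiv 2 (β → ℝ)).symm v with hv'
  have hLv : L v' = (WithLp.equiv 2 (α → ℝ)).symm (M *ᵥ v) := by
    simp [hL, hv', Matrix.toEuclideanLin_apply_piLp_toLp, WithLp.equiv_symm_apply]
  have hval : ∑ A, ∑ B, u A * M A B * v B = inner (𝕜 := ℝ) u' (L v') := by
    rw [hLv]
    simp only [PiLp.inner_apply, RCLike.inner_apply, starRingEnd_apply, star_trivial]
    refine Finset.sum_congr rfl fun A _ => ?_
    simp only [WithLp.equiv_symm_apply, PiLp.toLp_apply, Matrix.mulVec, dotProduct, Finset.mul_sum, Finset.sum_mul]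
    refine Finset.sum_congr rfl fun B _ => ?_
    rw [hu']
    simp only [WithLp.equiv_symm_apply, PiLp.toLp_apply, WithLp.ofLp_toLp]
    ring
  have hnu : ‖u'‖ = Real.sqrt (∑ A, u A ^ 2) := by
    rw [EuclideanSpace.norm_eq]
    congr 1
    refine Finset.sum_congr rfl fun A _ => ?_
    rw [hu']
    simp [Real.norm_eq_abs, sq_abs, WithLp.equiv_symm_apply, PiLp.toLp_apply]
  have hnv : ‖v'‖ = Real.sqrt (∑ B, v B ^ 2) := by
    rw [EuclideanSpace.norm_eq]
    congr 1
    refine Finset.sum_congr rfl fun B _ => ?_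
    rw [hv']
    simp [Real.norm_eq_abs, sq_abs, WithLp.equiv_symm_apply, PiLp.toLp_apply]
  calc |∑ A, ∑ B, u A * M A B * v B| = |inner (𝕜 := ℝ) u' (L v')| := by rw [hval]
    _ ≤ ‖u'‖ * ‖L v'‖ := abs_real_inner_le_norm _ _
    _ ≤ ‖u'‖ * (‖L‖ * ‖v'‖) := by
        have := L.le_opNorm v'
        nlinarith [norm_nonneg u']
    _ = opNorm M * Real.sqrt (∑ A, u A ^ 2) * Real.sqrt (∑ B, v B ^ 2) := by
        rw [hnu, hnv]; unfold opNorm; rw [← hL]; ring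

open Finset

lemma sgn_sq (b : Bool) : sgn b ^ 2 = 1 := by cases b <;> simp [sgn]

lemma sum_scatter {ι κ : Type*} [Fintype κ] [DecidableEq κ] (D : Finset ι) (F : ι → κ)
    (w : ι → ℝ) (X : κ → ℝ) :
    ∑ A : κ, (∑ φ ∈ D, if F φ = A then w φ else 0) * X A = ∑ φ ∈ D, w φ * X (F φ) := by
  classical
  simp_rw [Finset.sum_mul, ite_mul, zero_mul]
  rw [Finset.sum_comm]
  refine Finset.sum_congr rfl fun φ _ => ?_
  rw [Finset.sum_ite_eq Finset.univ (F φ) (fun A => w φ * X A), if_pos (Finset.mem_univ _)]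

lemma sum_scatter_sq {ι κ : Type*} [Fintype κ] [DecidableEq κ] (D : Finset ι) (F : ι → κ)
    (w : ι → ℝ) (hF : Function.Injective F) (hw : ∀ φ ∈ D, w φ * w φ = 1) :
    ∑ A : κ, (∑ φ ∈ D, if F φ = A then w φ else 0) ^ 2 = D.card := by
  classical
  have h1 : ∀ A : κ, (∑ φ ∈ D, if F φ = A then w φ else 0) ^ 2 =
      (∑ φ ∈ D, if F φ = A then w φ else 0) *
        (fun A => ∑ φ ∈ D, if F φ = A then w φ else 0) A := by
    intro A; rw [sq]
  rw [Finset.sum_congr rfl fun A _ => h1 A, sum_scatter]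
  have h2 : ∀ φ ∈ D, w φ * (fun A => ∑ φ' ∈ D, if F φ' = A then w φ' else 0) (F φ) = 1 := by
    intro φ hφ
    simp only []
    rw [Finset.sum_eq_single_of_mem φ hφ]
    · rw [if_pos rfl]; exact hw φ hφ
    · intro φ' _ hne
      exact if_neg (fun hc => hne (hF hc))
  rw [Finset.sum_congr rfl h2, Finset.sum_const, nsmul_eq_mul, mul_one]

def emb (n m t b : ℕ) (r : Fin m) (hb : b < t) (htm : t * m ≤ n) : Fin n :=
  ⟨b * m + r, by
    have h1 : b * m + (r : ℕ) < b * m + m := Nat.add_lt_add_left r.2 _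
    have h2 : b * m + m ≤ t * m := by
      calc b * m + m = (b + 1) * m := by ring
        _ ≤ t * m := Nat.mul_le_mul_right m hb
    exact lt_of_lt_of_le h1 (le_trans h2 htm)⟩

lemma emb_lt {n m t b b' : ℕ} {r r' : Fin m} (h : b < b') (hb : b < t) (hb' : b' < t)
    (htm : t * m ≤ n) : emb n m t b r hb htm < emb n m t b' r' hb' htm := by
  have h1 : b * m + (r : ℕ) < b * m + m := Nat.add_lt_add_left r.2 _
  have h2 : b * m + m ≤ b' * m := by
    calc b * m + m = (b + 1) * m := by ring
      _ ≤ b' * m := Nat.mul_le_mul_right m h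
  exact Fin.mk_lt_mk.2 (lt_of_lt_of_le h1 (le_trans h2 (Nat.le_add_right _ _)))

lemma emb_inj {n m t b b' : ℕ} {r r' : Fin m} {hb : b < t} {hb' : b' < t} {htm : t * m ≤ n}
    (h : emb n m t b r hb htm = emb n m t b' r' hb' htm) : b = b' ∧ r = r' := by
  rcases lt_trichotomy b b' with hc | hc | hc
  · exact absurd h (ne_of_lt (emb_lt hc hb hb' htm))
  · subst hc
    refine ⟨rfl, ?_⟩
    have := congrArg Fin.val h
    simp only [emb] at this
    exact Fin.ext (Nat.add_left_cancel this)
  · exact absurd h.symm (ne_of_lt (emb_lt hc hb' hb htm))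

section
variable (n m x y : ℕ) (htm : (x + y) * m ≤ n)

def embU (i : Fin x) (r : Fin m) : Fin n :=
  emb n m (x + y) i r (lt_of_lt_of_le i.2 (Nat.le_add_right x y)) htm

def embV (j : Fin y) (r : Fin m) : Fin n :=
  emb n m (x + y) (x + j) r (by omega) htm

lemma strictMono_U (φ : Fin x → Fin m) :
    StrictMono (fun i : Fin x => embU n m x y htm i (φ i)) :=
  fun _ _ h => emb_lt h _ _ htm

lemma strictMono_V (ψ : Fin y → Fin m) :
    StrictMono (fun j : Fin y => embV n m x y htm j (ψ j)) :=
  fun _ _ h => emb_lt (by omega) _ _ htm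

def AU (φ : Fin x → Fin m) : SubsetsCard n x :=
  ⟨Finset.image (fun i : Fin x => embU n m x y htm i (φ i)) Finset.univ, by
    rw [Finset.card_image_of_injective _ (strictMono_U n m x y htm φ).injective, card_univ,
      Fintype.card_fin]⟩

def BV (ψ : Fin y → Fin m) : SubsetsCard n y :=
  ⟨Finset.image (fun j : Fin y => embV n m x y htm j (ψ j)) Finset.univ, by
    rw [Finset.card_image_of_injective _ (strictMono_V n m x y htm ψ).injective, card_univ,
      Fintype.card_fin]⟩

lemma tup_AU (φ : Fin x → Fin m) (i : Fin x) :
    tup (AU n m x y htm φ) i = embU n m x y htm i (φ i) := by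
  have h := Finset.orderEmbOfFin_unique (AU n m x y htm φ).2
    (f := fun i : Fin x => embU n m x y htm i (φ i))
    (fun i => Finset.mem_image_of_mem _ (Finset.mem_univ i)) (strictMono_U n m x y htm φ)
  unfold tup
  rw [Finset.coe_orderIsoOfFin_apply, ← h]

lemma tup_BV (ψ : Fin y → Fin m) (j : Fin y) :
    tup (BV n m x y htm ψ) j = embV n m x y htm j (ψ j) := by
  have h := Finset.orderEmbOfFin_unique (BV n m x y htm ψ).2
    (f := fun j : Fin y => embV n m x y htm j (ψ j))
    (fun j => Finset.mem_image_of_mem _ (Finset.mem_univ j)) (strictMono_V n m x y htm ψ)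
  unfold tup
  rw [Finset.coe_orderIsoOfFin_apply, ← h]

lemma disj_AU_BV (φ : Fin x → Fin m) (ψ : Fin y → Fin m) :
    Disjoint (AU n m x y htm φ).1 (BV n m x y htm ψ).1 := by
  rw [Finset.disjoint_left]
  rintro a ha hb
  simp only [AU, BV, Finset.mem_image, Finset.mem_univ, true_and] at ha hb
  obtain ⟨i, rfl⟩ := ha
  obtain ⟨j, hj⟩ := hb
  have hlt : (embU n m x y htm i (φ i) : ℕ) < x * m := by
    have h1 : (i : ℕ) * m + (φ i : ℕ) < ((i : ℕ) + 1) * m := by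
      have := (φ i).2
      calc (i : ℕ) * m + (φ i : ℕ) < (i : ℕ) * m + m := by omega
        _ = ((i : ℕ) + 1) * m := by ring
    exact lt_of_lt_of_le h1 (Nat.mul_le_mul_right m i.2)
  have hge : x * m ≤ (embV n m x y htm j (ψ j) : ℕ) := by
    have : x * m ≤ (x + (j : ℕ)) * m := Nat.mul_le_mul_right m (Nat.le_add_right _ _)
    exact le_trans this (Nat.le_add_right _ _)
  rw [hj] at hge
  omega

lemma AU_inj : Function.Injective (AU n m x y htm) := by
  intro φ φ' h
  funext i
  have := (tup_AU n m x y htm φ i).symm.trans ((congrArg (fun A => tup A i) h).trans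
    (tup_AU n m x y htm φ' i))
  exact (emb_inj this).2

lemma BV_inj : Function.Injective (BV n m x y htm) := by
  intro ψ ψ' h
  funext j
  have := (tup_BV n m x y htm ψ j).symm.trans ((congrArg (fun B => tup B j) h).trans
    (tup_BV n m x y htm ψ' j))
  exact (emb_inj this).2

variable (hm : 0 < m) (S : Finset (Fin x ⊕ Fin y)) (E : Finset (Fin x × Fin y))
  (g : Sym2 (Fin n) → Bool)

def zed : Fin m := ⟨0, hm⟩

def DU : Finset (Fin x → Fin m) :=
  Fintype.piFinset (fun i => if Sum.inl i ∈ S then {zed m hm} else Finset.univ)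

def DV : Finset (Fin y → Fin m) :=
  Fintype.piFinset (fun j => if Sum.inr j ∈ S then {zed m hm} else Finset.univ)

noncomputable def Pf (φ : Fin x → Fin m) : ℝ :=
  ∏ e ∈ E.filter (fun e => Sum.inl e.1 ∉ S),
    sgn (g s(embU n m x y htm e.1 (φ e.1), embV n m x y htm e.2 (zed m hm)))

noncomputable def Qf (ψ : Fin y → Fin m) : ℝ :=
  ∏ e ∈ E.filter (fun e => Sum.inl e.1 ∈ S),
    sgn (g s(embU n m x y htm e.1 (zed m hm), embV n m x y htm e.2 (ψ e.2)))

lemma Pf_sq (φ : Fin x → Fin m) :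
    Pf n m x y htm hm S E g φ * Pf n m x y htm hm S E g φ = 1 := by
  rw [← sq]; unfold Pf; rw [← Finset.prod_pow]; simp [sgn_sq]

lemma Qf_sq (ψ : Fin y → Fin m) :
    Qf n m x y htm hm S E g ψ * Qf n m x y htm hm S E g ψ = 1 := by
  rw [← sq]; unfold Qf; rw [← Finset.prod_pow]; simp [sgn_sq]

lemma entry_eq (hS : IsVertexCover E S) {φ : Fin x → Fin m} {ψ : Fin y → Fin m}
    (hφ : φ ∈ DU m x y hm S) (hψ : ψ ∈ DV m x y hm S) :
    RH E g (AU n m x y htm φ) (BV n m x y htm ψ) =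
      Pf n m x y htm hm S E g φ * Qf n m x y htm hm S E g ψ := by
  have hφ' : ∀ i : Fin x, Sum.inl i ∈ S → φ i = zed m hm := by
    intro i hi
    have := (Fintype.mem_piFinset.1 hφ) i
    rwa [if_pos hi, Finset.mem_singleton] at this
  have hψ' : ∀ j : Fin y, Sum.inr j ∈ S → ψ j = zed m hm := by
    intro j hj
    have := (Fintype.mem_piFinset.1 hψ) j
    rwa [if_pos hj, Finset.mem_singleton] at this
  show (if Disjoint _ _ then _ else (0 : ℝ)) = _
  rw [if_pos (disj_AU_BV n m x y htm φ ψ)]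
  have hprod : ∀ e ∈ E, sgn (g s(tup (AU n m x y htm φ) e.1, tup (BV n m x y htm ψ) e.2)) =
      sgn (g s(embU n m x y htm e.1 (φ e.1), embV n m x y htm e.2 (ψ e.2))) := by
    intro e _
    rw [tup_AU, tup_BV]
  rw [Finset.prod_congr rfl hprod,
    ← Finset.prod_filter_mul_prod_filter_not E (fun e => Sum.inl e.1 ∈ S), mul_comm]
  congr 1
  · refine Finset.prod_congr rfl fun e he => ?_
    rw [Finset.mem_filter] at he
    rcases hS e he.1 with h | h
    · exact absurd h he.2
    · rw [hψ' e.2 h]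
  · refine Finset.prod_congr rfl fun e he => ?_
    rw [Finset.mem_filter] at he
    rw [hφ' e.1 he.2]

lemma card_DU_mul_card_DV :
    (DU m x y hm S).card * (DV m x y hm S).card = m ^ (x + y - S.card) := by
  unfold DU DV
  rw [Fintype.card_piFinset, Fintype.card_piFinset]
  have h1 : ∀ i : Fin x, (if Sum.inl i ∈ S then ({zed m hm} : Finset (Fin m)) else univ).card
      = if Sum.inl i ∈ S then 1 else m := by
    intro i; split <;> simp
  have h2 : ∀ j : Fin y, (if Sum.inr j ∈ S then ({zed m hm} : Finset (Fin m)) else univ).card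
      = if Sum.inr j ∈ S then 1 else m := by
    intro j; split <;> simp
  rw [Finset.prod_congr rfl (fun i _ => h1 i), Finset.prod_congr rfl (fun j _ => h2 j)]
  have hst := Fintype.prod_sum_type (fun k : Fin x ⊕ Fin y => if k ∈ S then 1 else m)
  rw [← hst]
  rw [← Finset.prod_filter_mul_prod_filter_not univ (fun k => k ∈ S)
    (fun k => if k ∈ S then 1 else m)]
  have h3 : ∏ k ∈ univ.filter (fun k => k ∈ S), (if k ∈ S then 1 else m) = 1 := by
    refine Finset.prod_eq_one fun k hk => ?_
    rw [Finset.mem_filter] at hk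
    rw [if_pos hk.2]
  have h4 : ∏ k ∈ univ.filter (fun k => ¬ k ∈ S), (if k ∈ S then 1 else m) =
      m ^ (x + y - S.card) := by
    rw [Finset.prod_congr rfl (fun k hk => if_neg (Finset.mem_filter.1 hk).2),
      Finset.prod_const]
    congr 1
    rw [Finset.filter_not, Finset.filter_mem_eq_inter, Finset.univ_inter,
      Finset.card_sdiff_of_subset (Finset.subset_univ S), Finset.card_univ]
    simp
  rw [h3, h4, one_mul]

end

theorem stmt17 (x y q : ℕ) (E : Finset (Fin x × Fin y))
    (hq : IsLeast {m | ∃ S : Finset (Fin x ⊕ Fin y), IsVertexCover E S ∧ S.card = m} q) :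
    ∃ (c : ℝ) (N₀ : ℕ), 0 < c ∧
      ∀ n : ℕ, N₀ ≤ n → ∀ g : Sym2 (Fin n) → Bool,
        c * (n : ℝ) ^ ((((x + y : ℕ) : ℝ) - (q : ℝ)) / 2) ≤ opNorm (RH E g) := by
  classical
  obtain ⟨⟨S, hS, hScard⟩, hmin⟩ := hq
  have hqt : q ≤ x + y := by
    have hmem : (x + y) ∈ {m | ∃ S : Finset (Fin x ⊕ Fin y), IsVertexCover E S ∧ S.card = m} :=
      ⟨Finset.univ, fun e _ => Or.inl (Finset.mem_univ _), by
        rw [Finset.card_univ]; simp⟩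
    exact hmin hmem
  by_cases ht : x + y = 0
  · -- degenerate case
    have hx : x = 0 := by omega
    have hy : y = 0 := by omega
    subst hx; subst hy
    have hq0 : q = 0 := by omega
    subst hq0
    refine ⟨1, 0, one_pos, fun n _ g => ?_⟩
    have hexp : ((((0 + 0 : ℕ) : ℝ) - ((0 : ℕ) : ℝ)) / 2) = 0 := by norm_num
    rw [hexp, Real.rpow_zero, mul_one]
    haveI : Unique (SubsetsCard n 0) :=
      ⟨⟨⟨∅, rfl⟩⟩, fun A => Subtype.ext (Finset.card_eq_zero.mp A.2)⟩
    have hb := bilin_le (RH E g) (fun _ => (1 : ℝ)) (fun _ => (1 : ℝ))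
    have hE : E = ∅ := Finset.eq_empty_of_isEmpty E
    have hentry : RH E g default default = 1 := by
      show (if Disjoint _ _ then _ else (0 : ℝ)) = 1
      rw [hE]
      simp only [Finset.prod_empty]
      rw [if_pos]
      exact Finset.disjoint_left.2 fun a ha _ => by
        simp [Finset.card_eq_zero.mp (default : SubsetsCard n 0).2] at ha
    have hsum : ∑ A : SubsetsCard n 0, ∑ B : SubsetsCard n 0,
        (1 : ℝ) * RH E g A B * 1 = 1 := by
      simp [Finset.univ_unique, hentry]
    have hone : ∑ A : SubsetsCard n 0, (1 : ℝ) ^ 2 = 1 := by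
      simp [Finset.univ_unique]
    rw [hsum, hone, Real.sqrt_one] at hb
    simpa using hb
  · have ht1 : 1 ≤ x + y := by omega
    set t := x + y with htdef
    set k := t - q with hkdef
    set ee : ℝ := (k : ℝ) / 2 with heedef
    have hee : (((x + y : ℕ) : ℝ) - (q : ℝ)) / 2 = ee := by
      rw [heedef, hkdef, Nat.cast_sub hqt]
    have hee0 : 0 ≤ ee := by positivity
    refine ⟨((2 * t : ℝ))⁻¹ ^ ee, t, Real.rpow_pos_of_pos (by positivity) ee, fun n hn g => ?_⟩
    set m := n / t with hmdef
    have htpos : 0 < t := ht1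
    have hm : 0 < m := Nat.div_pos hn htpos
    have htm : t * m ≤ n := by
      rw [hmdef, mul_comm]
      exact Nat.div_mul_le_self n t
    -- test vectors
    set u : SubsetsCard n x → ℝ := fun A =>
      ∑ φ ∈ DU m x y hm S, if AU n m x y htm φ = A then Pf n m x y htm hm S E g φ else 0
      with hu
    set v : SubsetsCard n y → ℝ := fun B =>
      ∑ ψ ∈ DV m x y hm S, if BV n m x y htm ψ = B then Qf n m x y htm hm S E g ψ else 0
      with hv
    have hb := bilin_le (RH E g) u v
    have hsum : ∑ A, ∑ B, u A * RH E g A B * v B =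
        ((DU m x y hm S).card : ℝ) * ((DV m x y hm S).card : ℝ) := by
      have step1 : ∑ A, ∑ B, u A * RH E g A B * v B =
          ∑ A, u A * (∑ B, v B * RH E g A B) := by
        refine Finset.sum_congr rfl fun A _ => ?_
        rw [Finset.mul_sum]
        exact Finset.sum_congr rfl fun B _ => by ring
      rw [step1, hu]
      rw [sum_scatter (DU m x y hm S) (AU n m x y htm) (Pf n m x y htm hm S E g)]
      have step2 : ∀ φ ∈ DU m x y hm S,
          Pf n m x y htm hm S E g φ * (∑ B, v B * RH E g (AU n m x y htm φ) B) =
          Pf n m x y htm hm S E g φ * ((DV m x y hm S).card : ℝ) *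
            (Pf n m x y htm hm S E g φ) := by
        intro φ hφ
        rw [hv, sum_scatter (DV m x y hm S) (BV n m x y htm) (Qf n m x y htm hm S E g)
          (fun B => RH E g (AU n m x y htm φ) B)]
        have inner : ∀ ψ ∈ DV m x y hm S,
            Qf n m x y htm hm S E g ψ * RH E g (AU n m x y htm φ) (BV n m x y htm ψ) =
            Pf n m x y htm hm S E g φ := by
          intro ψ hψ
          rw [entry_eq n m x y htm hm S E g hS hφ hψ]
          have := Qf_sq n m x y htm hm S E g ψ
          calc Qf n m x y htm hm S E g ψ *
              (Pf n m x y htm hm S E g φ * Qf n m x y htm hm S E g ψ) =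
              (Qf n m x y htm hm S E g ψ * Qf n m x y htm hm S E g ψ) *
                Pf n m x y htm hm S E g φ := by ring
            _ = Pf n m x y htm hm S E g φ := by rw [this, one_mul]
        rw [Finset.sum_congr rfl inner, Finset.sum_const, nsmul_eq_mul]
        ring
      rw [Finset.sum_congr rfl step2]
      have step3 : ∀ φ ∈ DU m x y hm S,
          Pf n m x y htm hm S E g φ * ((DV m x y hm S).card : ℝ) *
            Pf n m x y htm hm S E g φ = ((DV m x y hm S).card : ℝ) := by
        intro φ hφ
        have := Pf_sq n m x y htm hm S E g φ
        calc Pf n m x y htm hm S E g φ * ((DV m x y hm S).card : ℝ) *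
            Pf n m x y htm hm S E g φ =
            (Pf n m x y htm hm S E g φ * Pf n m x y htm hm S E g φ) *
              ((DV m x y hm S).card : ℝ) := by ring
          _ = ((DV m x y hm S).card : ℝ) := by rw [this, one_mul]
      rw [Finset.sum_congr rfl step3, Finset.sum_const, nsmul_eq_mul]
    have hu2 : ∑ A, u A ^ 2 = ((DU m x y hm S).card : ℝ) := by
      rw [hu]
      exact sum_scatter_sq (DU m x y hm S) (AU n m x y htm) (Pf n m x y htm hm S E g)
        (AU_inj n m x y htm) (fun φ hφ => Pf_sq n m x y htm hm S E g φ)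
    have hv2 : ∑ B, v B ^ 2 = ((DV m x y hm S).card : ℝ) := by
      rw [hv]
      exact sum_scatter_sq (DV m x y hm S) (BV n m x y htm) (Qf n m x y htm hm S E g)
        (BV_inj n m x y htm) (fun ψ hψ => Qf_sq n m x y htm hm S E g ψ)
    rw [hsum, hu2, hv2] at hb
    clear_value u v
    clear hsum hu2 hv2 hu hv u v
    set a : ℝ := ((DU m x y hm S).card : ℝ) with ha
    set b : ℝ := ((DV m x y hm S).card : ℝ) with hbb
    have hcard : (DU m x y hm S).card * (DV m x y hm S).card = m ^ k := by
      rw [card_DU_mul_card_DV, hScard]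
    have hab : a * b = (m : ℝ) ^ (k : ℕ) := by
      rw [ha, hbb, ← Nat.cast_mul, hcard]
      push_cast
      ring
    have hmk1 : (1 : ℝ) ≤ (m : ℝ) ^ (k : ℕ) := by
      have : (1 : ℝ) ≤ (m : ℝ) := by exact_mod_cast hm
      exact one_le_pow₀ this
    have ha0 : 0 ≤ a := by positivity
    have hb0 : 0 ≤ b := by positivity
    have habpos : 0 < a * b := by rw [hab]; linarith
    have hapos : 0 < a := by
      rcases lt_or_eq_of_le ha0 with h | h
      · exact h
      · rw [← h, zero_mul] at habpos; linarith
    have hbpos : 0 < b := by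
      rcases lt_or_eq_of_le hb0 with h | h
      · exact h
      · rw [← h, mul_zero] at habpos; linarith
    set s : ℝ := Real.sqrt a * Real.sqrt b with hs
    have hspos : 0 < s := mul_pos (Real.sqrt_pos.2 hapos) (Real.sqrt_pos.2 hbpos)
    have hs2 : s * s = a * b := by
      rw [hs, mul_mul_mul_comm, Real.mul_self_sqrt ha0, Real.mul_self_sqrt hb0]
    have hop : s ≤ opNorm (RH E g) := by
      have habs : |a * b| = a * b := abs_of_pos habpos
      rw [habs] at hb
      have : s * s ≤ opNorm (RH E g) * s := by
        rw [hs2]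
        calc a * b ≤ opNorm (RH E g) * Real.sqrt a * Real.sqrt b := hb
          _ = opNorm (RH E g) * s := by rw [hs]; ring
      exact le_of_mul_le_mul_right (by linarith [this]) hspos
    have hseq : s = (m : ℝ) ^ ee := by
      rw [hs, ← Real.sqrt_mul ha0, hab, heedef]
      rw [← Real.rpow_natCast (m : ℝ) k, Real.sqrt_eq_rpow,
        ← Real.rpow_mul (by positivity : (0 : ℝ) ≤ (m : ℝ))]
      congr 1
      ring
    have hnm : (n : ℝ) ≤ 2 * (t : ℝ) * (m : ℝ) := by
      have h1 : t * m + n % t = n := by rw [hmdef]; exact Nat.div_add_mod n t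
      have h2 : n % t < t := Nat.mod_lt n htpos
      have h3 : t ≤ t * m := Nat.le_mul_of_pos_right t hm
      have h4 : n ≤ 2 * (t * m) := by
        calc n = t * m + n % t := h1.symm
          _ ≤ t * m + t := Nat.add_le_add_left (le_of_lt h2) _
          _ ≤ t * m + t * m := Nat.add_le_add_left h3 _
          _ = 2 * (t * m) := by ring
      calc (n : ℝ) ≤ ((2 * (t * m) : ℕ) : ℝ) := by exact_mod_cast h4
        _ = 2 * (t : ℝ) * (m : ℝ) := by push_cast; ring
    have hfinal : ((2 * t : ℝ))⁻¹ ^ ee * (n : ℝ) ^ ee ≤ (m : ℝ) ^ ee := by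
      rw [← Real.mul_rpow (by positivity) (by positivity)]
      refine Real.rpow_le_rpow (by positivity) ?_ hee0
      rw [inv_mul_le_iff₀ (by positivity)]
      exact hnm
    rw [hee]
    calc ((2 * t : ℝ))⁻¹ ^ ee * (n : ℝ) ^ ee ≤ (m : ℝ) ^ ee := hfinal
      _ = s := hseq.symm
      _ ≤ opNorm (RH E g) := hop
end
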